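/- arXiv:2207.03662 — 5 statements merged into one kernel-verified Lean document; each statement's English description precedes it below -/
import Mathlib

section
/- Let P, P' : ℝ → Prop be time-indexed predicates and let t, a, τ, b ∈ ℝ with 0 ≤ a ≤ τ ≤ b. Then the until formula (P U_{[a,b]} P') holds at time t, i.e. (∃ t' ∈ [t+a, t+b], P' t' ∧ ∀ s ∈ [t, t'], P s), if and only if [∃ t' ∈ [t+a, t+τ), P' t' ∧ ∀ s ∈ [t, t'], P s] ∨ [(∀ s ∈ [t, t+τ), P s) ∧ ((P (t+τ) ∧ P' (t+τ)) ∨ (∃ t' ∈ (t+τ, t+b], P' t' ∧ ∀ s ∈ [t, t'], P s))]. -/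
/-- Proposition 1 (syntactic separation of until at time τ), closed interval [a,b]. -/
theorem until_separation_Icc (P P' : ℝ → Prop) (t a τ b : ℝ)
    (h0a : 0 ≤ a) (haτ : a ≤ τ) (hτb : τ ≤ b) :
    (∃ t' ∈ Set.Icc (t + a) (t + b), P' t' ∧ ∀ s ∈ Set.Icc t t', P s) ↔
      ((∃ t' ∈ Set.Ico (t + a) (t + τ), P' t' ∧ ∀ s ∈ Set.Icc t t', P s) ∨
        ((∀ s ∈ Set.Ico t (t + τ), P s) ∧
          ((P (t + τ) ∧ P' (t + τ)) ∨
            (∃ t' ∈ Set.Ioc (t + τ) (t + b), P' t' ∧ ∀ s ∈ Set.Icc t t', P s)))) := by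
  constructor
  · rintro ⟨t', ⟨h1, h2⟩, hP', hall⟩
    rcases lt_trichotomy t' (t + τ) with hlt | heq | hgt
    · exact Or.inl ⟨t', ⟨h1, hlt⟩, hP', hall⟩
    · refine Or.inr ⟨fun s hs => hall s ⟨hs.1, by linarith [hs.2]⟩,
        Or.inl ⟨heq ▸ hall t' ⟨by linarith, le_refl _⟩, heq ▸ hP'⟩⟩
    · exact Or.inr ⟨fun s hs => hall s ⟨hs.1, by linarith [hs.2]⟩,
        Or.inr ⟨t', ⟨hgt, h2⟩, hP', hall⟩⟩
  · rintro (⟨t', ⟨h1, h2⟩, hP', hall⟩ | ⟨hG, ⟨hPτ, hP'τ⟩ | ⟨t', ⟨h1, h2⟩, hP', hall⟩⟩)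
    · exact ⟨t', ⟨h1, by linarith⟩, hP', hall⟩
    · refine ⟨t + τ, ⟨by linarith, by linarith⟩, hP'τ, fun s hs => ?_⟩
      rcases lt_or_eq_of_le hs.2 with h | h
      · exact hG s ⟨hs.1, h⟩
      · exact h ▸ hPτ
    · exact ⟨t', ⟨by linarith, h2⟩, hP', hall⟩
end

section
/- Let P, P' : ℝ → Prop be time-indexed predicates and let t, a, τ, b ∈ ℝ with 0 ≤ a ≤ τ < b. Then (∃ t' ∈ [t+a, t+b), P' t' ∧ ∀ s ∈ [t, t'], P s) if and only if [∃ t' ∈ [t+a, t+τ), P' t' ∧ ∀ s ∈ [t, t'], P s] ∨ [(∀ s ∈ [t, t+τ), P s) ∧ ((P (t+τ) ∧ P' (t+τ)) ∨ (∃ t' ∈ (t+τ, t+b), P' t' ∧ ∀ s ∈ [t, t'], P s))]. -/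
/-- Proposition 1 variant: syntactic separation of until at time τ for [a,b). -/
theorem until_separation_Ico (P P' : ℝ → Prop) (t a τ b : ℝ)
    (h0a : 0 ≤ a) (haτ : a ≤ τ) (hτb : τ < b) :
    (∃ t' ∈ Set.Ico (t + a) (t + b), P' t' ∧ ∀ s ∈ Set.Icc t t', P s) ↔
      ((∃ t' ∈ Set.Ico (t + a) (t + τ), P' t' ∧ ∀ s ∈ Set.Icc t t', P s) ∨
        ((∀ s ∈ Set.Ico t (t + τ), P s) ∧
          ((P (t + τ) ∧ P' (t + τ)) ∨
            (∃ t' ∈ Set.Ioo (t + τ) (t + b), P' t' ∧ ∀ s ∈ Set.Icc t t', P s)))) := by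
  constructor
  · rintro ⟨t', ⟨h1, h2⟩, hP', hall⟩
    rcases lt_or_ge t' (t + τ) with h | h
    · exact Or.inl ⟨t', ⟨h1, h⟩, hP', hall⟩
    · refine Or.inr ⟨fun s hs => hall s ⟨hs.1, le_trans hs.2.le h⟩, ?_⟩
      rcases eq_or_lt_of_le h with heq | hlt
      · refine Or.inl ⟨?_, heq ▸ hP'⟩
        exact hall (t + τ) ⟨by linarith, h⟩
      · exact Or.inr ⟨t', ⟨hlt, h2⟩, hP', hall⟩
  · rintro (⟨t', ⟨h1, h2⟩, hP', hall⟩ | ⟨hglob, ⟨hPτ, hP'τ⟩ | ⟨t', ⟨h1, h2⟩, hP', hall⟩⟩)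
    · exact ⟨t', ⟨h1, by linarith⟩, hP', hall⟩
    · refine ⟨t + τ, ⟨by linarith, by linarith⟩, hP'τ, fun s hs => ?_⟩
      rcases eq_or_lt_of_le hs.2 with heq | hlt
      · exact heq ▸ hPτ
      · exact hglob s ⟨hs.1, hlt⟩
    · exact ⟨t', ⟨by linarith [h1], h2⟩, hP', hall⟩
end

section
/- Let P, P' : ℝ → Prop be time-indexed predicates and let t, a, τ, b ∈ ℝ with 0 ≤ a < τ ≤ b. Then (∃ t' ∈ (t+a, t+b], P' t' ∧ ∀ s ∈ [t, t'], P s) if and only if [∃ t' ∈ (t+a, t+τ), P' t' ∧ ∀ s ∈ [t, t'], P s] ∨ [(∀ s ∈ [t, t+τ), P s) ∧ ((P (t+τ) ∧ P' (t+τ)) ∨ (∃ t' ∈ (t+τ, t+b], P' t' ∧ ∀ s ∈ [t, t'], P s))]. -/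
/-- Proposition 1 variant: syntactic separation of until at time τ for (a,b]. -/
theorem until_separation_Ioc (P P' : ℝ → Prop) (t a τ b : ℝ)
    (h0a : 0 ≤ a) (haτ : a < τ) (hτb : τ ≤ b) :
    (∃ t' ∈ Set.Ioc (t + a) (t + b), P' t' ∧ ∀ s ∈ Set.Icc t t', P s) ↔
      ((∃ t' ∈ Set.Ioo (t + a) (t + τ), P' t' ∧ ∀ s ∈ Set.Icc t t', P s) ∨
        ((∀ s ∈ Set.Ico t (t + τ), P s) ∧
          ((P (t + τ) ∧ P' (t + τ)) ∨
            (∃ t' ∈ Set.Ioc (t + τ) (t + b), P' t' ∧ ∀ s ∈ Set.Icc t t', P s)))) := by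
  constructor
  · rintro ⟨t', ⟨h1, h2⟩, hP', hall⟩
    rcases lt_trichotomy t' (t + τ) with hlt | heq | hgt
    · exact Or.inl ⟨t', ⟨h1, hlt⟩, hP', hall⟩
    · refine Or.inr ⟨fun s hs => hall s ⟨hs.1, by linarith [hs.2]⟩,
        Or.inl ⟨heq ▸ hall t' ⟨by linarith, le_refl _⟩, heq ▸ hP'⟩⟩
    · exact Or.inr ⟨fun s hs => hall s ⟨hs.1, by linarith [hs.2]⟩,
        Or.inr ⟨t', ⟨hgt, h2⟩, hP', hall⟩⟩
  · rintro (⟨t', ⟨h1, h2⟩, hP', hall⟩ | ⟨hico, ⟨hPτ, hP'τ⟩ | ⟨t', ⟨h1, h2⟩, hP', hall⟩⟩)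
    · exact ⟨t', ⟨h1, by linarith⟩, hP', hall⟩
    · refine ⟨t + τ, ⟨by linarith, by linarith⟩, hP'τ, fun s hs => ?_⟩
      rcases lt_or_eq_of_le hs.2 with h | h
      · exact hico s ⟨hs.1, h⟩
      · exact h ▸ hPτ
    · exact ⟨t', ⟨by linarith, h2⟩, hP', hall⟩
end

section
/- Let P, P' : ℝ → Prop be time-indexed predicates and let t, a, τ, b ∈ ℝ with 0 ≤ a < τ < b. Then (∃ t' ∈ (t+a, t+b), P' t' ∧ ∀ s ∈ [t, t'], P s) if and only if [∃ t' ∈ (t+a, t+τ), P' t' ∧ ∀ s ∈ [t, t'], P s] ∨ [(∀ s ∈ [t, t+τ), P s) ∧ ((P (t+τ) ∧ P' (t+τ)) ∨ (∃ t' ∈ (t+τ, t+b), P' t' ∧ ∀ s ∈ [t, t'], P s))]. -/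
/-- Proposition 1 variant: syntactic separation of until at time τ for (a,b). -/
theorem until_separation_Ioo (P P' : ℝ → Prop) (t a τ b : ℝ)
    (h0a : 0 ≤ a) (haτ : a < τ) (hτb : τ < b) :
    (∃ t' ∈ Set.Ioo (t + a) (t + b), P' t' ∧ ∀ s ∈ Set.Icc t t', P s) ↔
      ((∃ t' ∈ Set.Ioo (t + a) (t + τ), P' t' ∧ ∀ s ∈ Set.Icc t t', P s) ∨
        ((∀ s ∈ Set.Ico t (t + τ), P s) ∧
          ((P (t + τ) ∧ P' (t + τ)) ∨
            (∃ t' ∈ Set.Ioo (t + τ) (t + b), P' t' ∧ ∀ s ∈ Set.Icc t t', P s)))) := by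
  constructor
  · rintro ⟨t', ⟨h1, h2⟩, hP', hG⟩
    rcases lt_trichotomy t' (t + τ) with h | h | h
    · exact Or.inl ⟨t', ⟨h1, h⟩, hP', hG⟩
    · refine Or.inr ⟨fun s hs => hG s ⟨hs.1, by rw [h]; exact hs.2.le⟩,
        Or.inl ⟨hG (t + τ) ⟨by linarith, h.ge⟩, h ▸ hP'⟩⟩
    · exact Or.inr ⟨fun s hs => hG s ⟨hs.1, by linarith [hs.2]⟩,
        Or.inr ⟨t', ⟨h, h2⟩, hP', hG⟩⟩
  · rintro (⟨t', ⟨h1, h2⟩, hP', hG⟩ | ⟨hGl, ⟨hPτ, hP'τ⟩ | ⟨t', ⟨h1, h2⟩, hP', hG⟩⟩)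
    · exact ⟨t', ⟨h1, by linarith⟩, hP', hG⟩
    · refine ⟨t + τ, ⟨by linarith, by linarith⟩, hP'τ, fun s hs => ?_⟩
      rcases lt_or_eq_of_le hs.2 with hlt | heq
      · exact hGl s ⟨hs.1, hlt⟩
      · exact heq ▸ hPτ
    · exact ⟨t', ⟨by linarith, h2⟩, hP', hG⟩
end

section
/- Let P, P' : ℝ → Prop be time-indexed predicates and let t, a, τ, b ∈ ℝ with 0 ≤ a ≤ τ ≤ b. If (∃ t' ∈ [t+a, t+b], P' t' ∧ ∀ s ∈ [t, t'], P s), then [∃ t' ∈ [t+a, t+τ), P' t' ∧ ∀ s ∈ [t, t'], P s] ∨ [(∀ s ∈ [t+a, t+τ), P s) ∧ ((P (t+τ) ∧ P' (t+τ)) ∨ (∃ t' ∈ (t+τ, t+b], P' t' ∧ ∀ s ∈ [t, t'], P s))]. -/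
/-- Forward (soundness) direction of the paper's Proposition 1 as stated there,
with the globally clause G_{[a,τ)} taken over [t+a, t+τ). -/
theorem until_separation_forward (P P' : ℝ → Prop) (t a τ b : ℝ)
    (h0a : 0 ≤ a) (haτ : a ≤ τ) (hτb : τ ≤ b)
    (h : ∃ t' ∈ Set.Icc (t + a) (t + b), P' t' ∧ ∀ s ∈ Set.Icc t t', P s) :
    (∃ t' ∈ Set.Ico (t + a) (t + τ), P' t' ∧ ∀ s ∈ Set.Icc t t', P s) ∨
      ((∀ s ∈ Set.Ico (t + a) (t + τ), P s) ∧
        ((P (t + τ) ∧ P' (t + τ)) ∨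
          (∃ t' ∈ Set.Ioc (t + τ) (t + b), P' t' ∧ ∀ s ∈ Set.Icc t t', P s))) := by
  obtain ⟨t', ⟨h1, h2⟩, hP', hall⟩ := h
  rcases lt_or_ge t' (t + τ) with hlt | hge
  · exact Or.inl ⟨t', ⟨h1, hlt⟩, hP', hall⟩
  · right
    constructor
    · intro s ⟨hs1, hs2⟩
      exact hall s ⟨le_trans (by linarith) hs1, by linarith⟩
    · rcases eq_or_lt_of_le hge with heq | hlt
      · left
        subst heq
        exact ⟨hall _ ⟨by linarith, le_refl _⟩, hP'⟩
      · exact Or.inr ⟨t', ⟨hlt, h2⟩, hP', hall⟩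
end
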